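/- Let A, A_k be real n×n matrices, B₁ a real n×m matrix, B₂ a real n×r matrix, B_k a real n×m matrix, C₁, C₂ real m×n matrices, C_k a real r×n matrix, and D₂₁ a real m×m matrix. Set R = C₁·B₁ + B₁ᵀ·C₁ᵀ and assume R is invertible. Define A_c = [[A, B₂·C_k],[B_k·C₂, A_k]], B_c = [B₁; B_k·D₂₁], C_c = [C₁, 0]. Suppose the real symmetric 2n×2n matrix Σ = [[Σ₁₁, Σ₁₂],[Σ₁₂ᵀ, Σ₂₂]] (blocks n×n) is positive definite and satisfies Σ·A_c + A_cᵀ·Σ + (B_cᵀ·Σ − C_c·A_c)ᵀ·R⁻¹·(B_cᵀ·Σ − C_c·A_c) = 0. Then there exist a real symmetric positive definite n×n matrix P, a real symmetric positive definite n×n matrix Z, a real r×n matrix F, and a real n×m matrix L such that: (a) P·(A + B₂·F) + (A + B₂·F)ᵀ·P + Q̃ᵀ·R⁻¹·Q̃ = 0 with Q̃ = C₁·(A + B₂·F) − B₁ᵀ·P; (b) Z·(A + L·C₂)ᵀ + (A + L·C₂)·Z + Q̄·R⁻¹·Q̄ᵀ = 0 with Q̄ = B₁ + L·D₂₁ − Z·Aᵀ·C₁ᵀ;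 and (c) every eigenvalue λ ∈ ℂ of Z·P (regarded as a complex matrix via the entrywise embedding ℝ → ℂ) satisfies |λ| ≤ 1. -/

import Mathlib

open Matrix

set_option linter.unusedSectionVars false


lemma fromColumns_sub {R m n₁ n₂ : Type*} [AddGroup R] (A₁ : Matrix m n₁ R) (A₂ : Matrix m n₂ R)
    (B₁ : Matrix m n₁ R) (B₂ : Matrix m n₂ R) :
    fromCols A₁ A₂ - fromCols B₁ B₂ = fromCols (A₁ - B₁) (A₂ - B₂) := by
  ext i (j | j) <;> simp

lemma fromRows_sub {R m₁ m₂ n : Type*} [AddGroup R] (A₁ : Matrix m₁ n R) (A₂ : Matrix m₂ n R)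
    (B₁ : Matrix m₁ n R) (B₂ : Matrix m₂ n R) :
    fromRows A₁ A₂ - fromRows B₁ B₂ = fromRows (A₁ - B₁) (A₂ - B₂) := by
  ext (i | i) j <;> simp

lemma toBlocks₁₁_zero {R n m : Type*} [Zero R] :
    Matrix.toBlocks₁₁ (0 : Matrix (n ⊕ m) (n ⊕ m) R) = 0 := rfl

lemma are_congr {N M : Type*} [Fintype N] [Fintype M] [DecidableEq N]
    (S Ac T T' : Matrix N N ℝ) (B : Matrix N M ℝ) (C : Matrix M N ℝ) (J : Matrix M M ℝ)
    (hT : T * T' = 1)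
    (h : S * Ac + Acᵀ * S + (Bᵀ * S - C * Ac)ᵀ * J * (Bᵀ * S - C * Ac) = 0) :
    (Tᵀ * S * T) * (T' * Ac * T) + (T' * Ac * T)ᵀ * (Tᵀ * S * T)
      + ((T' * B)ᵀ * (Tᵀ * S * T) - (C * T) * (T' * Ac * T))ᵀ * J
        * ((T' * B)ᵀ * (Tᵀ * S * T) - (C * T) * (T' * Ac * T)) = 0 := by
  have hT2 : T'ᵀ * Tᵀ = 1 := by rw [← transpose_mul, hT, transpose_one]
  have c1 : ∀ (X : Matrix N N ℝ), T * (T' * X) = X := fun X => by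
    rw [← Matrix.mul_assoc, hT, Matrix.one_mul]
  have c2 : ∀ (X : Matrix N N ℝ), T'ᵀ * (Tᵀ * X) = X := fun X => by
    rw [← Matrix.mul_assoc, hT2, Matrix.one_mul]
  have main : (Tᵀ * S * T) * (T' * Ac * T) + (T' * Ac * T)ᵀ * (Tᵀ * S * T)
      + ((T' * B)ᵀ * (Tᵀ * S * T) - (C * T) * (T' * Ac * T))ᵀ * J
        * ((T' * B)ᵀ * (Tᵀ * S * T) - (C * T) * (T' * Ac * T))
      = Tᵀ * ((S * Ac + Acᵀ * S + (Bᵀ * S - C * Ac)ᵀ * J * (Bᵀ * S - C * Ac)) * T) := by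
    simp only [Matrix.transpose_mul, Matrix.transpose_sub, Matrix.sub_mul, Matrix.mul_sub,
      Matrix.add_mul, Matrix.mul_add, Matrix.mul_assoc, Matrix.transpose_transpose, c1, c2]
  rw [main, h, Matrix.zero_mul, Matrix.mul_zero]

lemma are_dual {N M : Type*} [Fintype N] [Fintype M] [DecidableEq N]
    (W Ac Y : Matrix N N ℝ) (B : Matrix N M ℝ) (C : Matrix M N ℝ) (J : Matrix M M ℝ)
    (hWs : Wᵀ = W) (hY1 : Y * W = 1) (hY2 : W * Y = 1) (hYs : Yᵀ = Y)
    (h : W * Ac + Acᵀ * W + (Bᵀ * W - C * Ac)ᵀ * J * (Bᵀ * W - C * Ac) = 0) :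
    Ac * Y + Y * Acᵀ + (B - Y * Acᵀ * Cᵀ) * J * (B - Y * Acᵀ * Cᵀ)ᵀ = 0 := by
  have c1 : ∀ (X : Matrix N N ℝ), Y * (W * X) = X := fun X => by
    rw [← Matrix.mul_assoc, hY1, Matrix.one_mul]
  have c2 : ∀ (X : Matrix N N ℝ), W * (Y * X) = X := fun X => by
    rw [← Matrix.mul_assoc, hY2, Matrix.one_mul]
  have main : Ac * Y + Y * Acᵀ + (B - Y * Acᵀ * Cᵀ) * J * (B - Y * Acᵀ * Cᵀ)ᵀ
      = Y * ((W * Ac + Acᵀ * W + (Bᵀ * W - C * Ac)ᵀ * J * (Bᵀ * W - C * Ac)) * Y) := by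
    simp only [Matrix.transpose_mul, Matrix.transpose_sub, Matrix.sub_mul, Matrix.mul_sub,
      Matrix.add_mul, Matrix.mul_add, Matrix.mul_assoc, Matrix.transpose_transpose, hYs, hWs, hY1, hY2, Matrix.mul_one, c1, c2]
  rw [main, h, Matrix.zero_mul, Matrix.mul_zero]

variable {N M : Type*} [Fintype N] [Fintype M] [DecidableEq N] [DecidableEq M]

lemma posdef_block₁₁ {A : Matrix N N ℝ} {B : Matrix N M ℝ} {C : Matrix M N ℝ} {D : Matrix M M ℝ}
    (h : (fromBlocks A B C D).PosDef) : A.PosDef := by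
  refine posDef_iff_dotProduct_mulVec.mpr ⟨?_, fun x hx => ?_⟩
  · have := h.1
    rw [Matrix.IsHermitian, fromBlocks_conjTranspose] at this
    exact (fromBlocks_inj.mp this).1
  · have hx0 : (Sum.elim x 0 : N ⊕ M → ℝ) ≠ 0 := by
      intro hc
      exact hx (funext fun i => congrFun hc (Sum.inl i))
    have := h.dotProduct_mulVec_pos hx0
    simpa [Function.star_sumElim, fromBlocks_mulVec, sumElim_dotProduct_sumElim] using this

lemma posdef_block₂₂ {A : Matrix N N ℝ} {B : Matrix N M ℝ} {C : Matrix M N ℝ} {D : Matrix M M ℝ}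
    (h : (fromBlocks A B C D).PosDef) : D.PosDef := by
  refine posDef_iff_dotProduct_mulVec.mpr ⟨?_, fun x hx => ?_⟩
  · have := h.1
    rw [Matrix.IsHermitian, fromBlocks_conjTranspose] at this
    exact (fromBlocks_inj.mp this).2.2.2
  · have hx0 : (Sum.elim 0 x : N ⊕ M → ℝ) ≠ 0 := by
      intro hc
      exact hx (funext fun i => congrFun hc (Sum.inr i))
    have := h.dotProduct_mulVec_pos hx0
    simpa [Function.star_sumElim, fromBlocks_mulVec, sumElim_dotProduct_sumElim] using this

lemma posdef_congr {S T T' : Matrix N N ℝ} (hS : S.PosDef) (hT : T * T' = 1) :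
    (Tᵀ * S * T).PosDef := by
  have hT' : T' * T = 1 := mul_eq_one_comm.mp hT
  refine posDef_iff_dotProduct_mulVec.mpr ⟨?_, fun x hx => ?_⟩
  · have hs : Sᵀ = S := by
      have := hS.1; rwa [Matrix.IsHermitian, conjTranspose_eq_transpose_of_trivial] at this
    show (Tᵀ * S * T)ᴴ = _
    simp [conjTranspose_eq_transpose_of_trivial, transpose_mul, transpose_transpose, hs,
      Matrix.mul_assoc]
  · have hTx : T *ᵥ x ≠ 0 := by
      intro hc
      apply hx
      have : T' *ᵥ (T *ᵥ x) = x := by rw [mulVec_mulVec, hT', one_mulVec]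
      rw [hc, mulVec_zero] at this
      exact this.symm
    have key : star x ⬝ᵥ ((Tᵀ * S * T) *ᵥ x) = star (T *ᵥ x) ⬝ᵥ (S *ᵥ (T *ᵥ x)) := by
      simp only [star_trivial]
      rw [← mulVec_mulVec, ← mulVec_mulVec, dotProduct_mulVec, vecMul_transpose]
    rw [key]
    exact hS.dotProduct_mulVec_pos hTx

lemma quad_ofReal {k : ℕ} (Q : Matrix (Fin k) (Fin k) ℝ) (hQ : Qᵀ = Q) (v : Fin k → ℂ) :
    star v ⬝ᵥ ((Q.map (Complex.ofReal)) *ᵥ v) =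
      Complex.ofReal ((fun i => (v i).re) ⬝ᵥ (Q *ᵥ (fun i => (v i).re))
        + (fun i => (v i).im) ⬝ᵥ (Q *ᵥ (fun i => (v i).im))) := by
  have hsym : ∀ i j, Q j i = Q i j := fun i j => by
    conv_lhs => rw [← hQ]
    rfl
  apply Complex.ext
  · simp [dotProduct, mulVec, Complex.re_sum, Finset.mul_sum, mul_comm, mul_left_comm,
      Complex.mul_re, mul_add, add_mul, Finset.sum_add_distrib]
  · simp only [dotProduct, mulVec, Pi.star_apply, Matrix.map_apply, Complex.im_sum,
      Finset.mul_sum, Complex.mul_im, Complex.ofReal_im, Complex.star_def, Complex.conj_re, Complex.conj_im, Complex.mul_re,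
      Complex.ofReal_re, zero_mul, mul_zero, add_zero, zero_sub, sub_zero, mul_neg, neg_mul]
    rw [Finset.sum_comm (γ := Fin k)]
    simp only [Finset.sum_add_distrib]
    have : ∀ x x1 : Fin k, (v x1).re * (Q x1 x * (v x).im) = (v x).im * (Q x x1 * (v x1).re) := by
      intro x x1; rw [hsym x x1]; ring
    simp only [this]
    have hcomm : (∑ x : Fin k, ∑ x1 : Fin k, -((v x1).im * (Q x1 x * (v x).re)))
        = -(∑ x : Fin k, ∑ x1 : Fin k, (v x).im * (Q x x1 * (v x1).re)) := by
      rw [Finset.sum_comm]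
      simp
    rw [hcomm, add_neg_cancel]

lemma quad_pd {k : ℕ} {Q : Matrix (Fin k) (Fin k) ℝ} (hQ : Q.PosDef) {v : Fin k → ℂ}
    (hv : v ≠ 0) : ∃ t : ℝ, 0 < t ∧ star v ⬝ᵥ ((Q.map (Complex.ofReal)) *ᵥ v) = (t : ℂ) := by
  have hQs : Qᵀ = Q := by
    have := hQ.1; rwa [Matrix.IsHermitian, conjTranspose_eq_transpose_of_trivial] at this
  refine ⟨_, ?_, quad_ofReal Q hQs v⟩
  set x : Fin k → ℝ := fun i => (v i).re with hx
  set y : Fin k → ℝ := fun i => (v i).im with hy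
  have hxy : x ≠ 0 ∨ y ≠ 0 := by
    by_contra hc
    push_neg at hc
    apply hv
    funext i
    have h1 : (v i).re = 0 := congrFun hc.1 i
    have h2 : (v i).im = 0 := congrFun hc.2 i
    exact Complex.ext h1 h2
  have hxq : 0 ≤ x ⬝ᵥ (Q *ᵥ x) := by simpa using hQ.posSemidef.dotProduct_mulVec_nonneg x
  have hyq : 0 ≤ y ⬝ᵥ (Q *ᵥ y) := by simpa using hQ.posSemidef.dotProduct_mulVec_nonneg y
  rcases hxy with h | h
  · have := hQ.dotProduct_mulVec_pos h
    simp only [star_trivial] at this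
    linarith
  · have := hQ.dotProduct_mulVec_pos h
    simp only [star_trivial] at this
    linarith

lemma quad_psd {k : ℕ} {Q : Matrix (Fin k) (Fin k) ℝ} (hQ : Q.PosSemidef) (v : Fin k → ℂ) :
    ∃ t : ℝ, 0 ≤ t ∧ star v ⬝ᵥ ((Q.map (Complex.ofReal)) *ᵥ v) = (t : ℂ) := by
  have hQs : Qᵀ = Q := by
    have := hQ.1; rwa [Matrix.IsHermitian, conjTranspose_eq_transpose_of_trivial] at this
  refine ⟨_, ?_, quad_ofReal Q hQs v⟩
  have hxq := hQ.dotProduct_mulVec_nonneg (fun i => (v i).re)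
  have hyq := hQ.dotProduct_mulVec_nonneg (fun i => (v i).im)
  simp only [star_trivial] at hxq hyq
  linarith

lemma mapC_mul {k : ℕ} (X Y : Matrix (Fin k) (Fin k) ℝ) :
    (X.map Complex.ofReal) * (Y.map Complex.ofReal) = (X * Y).map Complex.ofReal := by
  ext i j
  simp [Matrix.mul_apply, Matrix.map_apply]

lemma mapC_sub {k : ℕ} (X Y : Matrix (Fin k) (Fin k) ℝ) :
    (X - Y).map Complex.ofReal = X.map Complex.ofReal - Y.map Complex.ofReal := by
  ext i j
  simp [Matrix.map_apply]

lemma spec_bound {k : ℕ} (S₁ P W : Matrix (Fin k) (Fin k) ℝ) (hS₁ : S₁.PosDef) (hP : P.PosDef)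
    (hW : W.PosSemidef) (hPSW : P = S₁ - W) (lam : ℂ)
    (hlam : lam ∈ spectrum ℂ ((S₁⁻¹ * P).map Complex.ofReal)) : ‖lam‖ ≤ 1 := by
  set M := (S₁⁻¹ * P).map Complex.ofReal with hM
  rw [spectrum.mem_iff] at hlam
  have hdet : (algebraMap ℂ (Matrix (Fin k) (Fin k) ℂ) lam - M).det = 0 := by
    by_contra hc
    exact hlam ((Matrix.isUnit_iff_isUnit_det _).mpr (isUnit_iff_ne_zero.mpr hc))
  obtain ⟨v, hv, hMv⟩ := (Matrix.exists_mulVec_eq_zero_iff).mpr hdet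
  have heig : M *ᵥ v = lam • v := by
    rw [Algebra.algebraMap_eq_smul_one, sub_mulVec, smul_mulVec, one_mulVec,
      sub_eq_zero] at hMv
    exact hMv.symm
  -- S₁ᶜ * M = Pᶜ
  have hSdet : IsUnit S₁.det := hS₁.det_pos.ne'.isUnit
  have hcancel : S₁ * (S₁⁻¹ * P) = P := Matrix.mul_nonsing_inv_cancel_left _ _ hSdet
  have hmapmul : (S₁.map Complex.ofReal) * M = P.map Complex.ofReal := by
    rw [hM, mapC_mul, hcancel]
  have hPv : (P.map Complex.ofReal) *ᵥ v = lam • ((S₁.map Complex.ofReal) *ᵥ v) := by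
    rw [← hmapmul, ← Matrix.mulVec_mulVec, heig, Matrix.mulVec_smul]
  obtain ⟨p, hp, hpq⟩ := quad_pd hP hv
  obtain ⟨a, ha, haq⟩ := quad_pd hS₁ hv
  obtain ⟨w, hw, hwq⟩ := quad_psd hW v
  have hpla : (p : ℂ) = lam * a := by
    rw [← hpq, ← haq, hPv, dotProduct_smul, smul_eq_mul]
  have hpaw : p = a - w := by
    have : (p : ℂ) = (a : ℂ) - (w : ℂ) := by
      rw [← hpq, ← haq, ← hwq, hPSW, mapC_sub, Matrix.sub_mulVec, dotProduct_sub]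
    exact_mod_cast this
  have hane : (a : ℂ) ≠ 0 := by exact_mod_cast ha.ne'
  have hlam_eq : lam = ((p / a : ℝ) : ℂ) := by
    rw [Complex.ofReal_div, eq_div_iff hane, ← hpla]
  rw [hlam_eq, Complex.norm_real, Real.norm_eq_abs, abs_of_pos (by positivity)]
  rw [div_le_one ha]
  linarith

/-- Algebraic content of the necessity part of the NI output feedback
synthesis theorem: a positive definite solution `Σ` of the closed-loop NI ARE yields
`P > 0`, `Z > 0`, `F` and `L` satisfying conditions (a), (b), and the spectral radius
condition `ρ(ZP) ≤ 1`. -/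
theorem stmt_12 {n m r : ℕ}
    (A Ak : Matrix (Fin n) (Fin n) ℝ)
    (B₁ Bk : Matrix (Fin n) (Fin m) ℝ) (B₂ : Matrix (Fin n) (Fin r) ℝ)
    (C₁ C₂ : Matrix (Fin m) (Fin n) ℝ) (Ck : Matrix (Fin r) (Fin n) ℝ)
    (D₂₁ : Matrix (Fin m) (Fin m) ℝ)
    (R : Matrix (Fin m) (Fin m) ℝ) (hR : R = C₁ * B₁ + B₁ᵀ * C₁ᵀ) (hRu : IsUnit R.det)
    (Ac : Matrix (Fin n ⊕ Fin n) (Fin n ⊕ Fin n) ℝ)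
    (hAc : Ac = fromBlocks A (B₂ * Ck) (Bk * C₂) Ak)
    (Bc : Matrix (Fin n ⊕ Fin n) (Fin m) ℝ) (hBc : Bc = fromRows B₁ (Bk * D₂₁))
    (Cc : Matrix (Fin m) (Fin n ⊕ Fin n) ℝ) (hCc : Cc = fromCols C₁ 0)
    (S₁₁ S₁₂ S₂₂ : Matrix (Fin n) (Fin n) ℝ)
    (Sg : Matrix (Fin n ⊕ Fin n) (Fin n ⊕ Fin n) ℝ)
    (hSg : Sg = fromBlocks S₁₁ S₁₂ S₁₂ᵀ S₂₂) (hSgpd : Sg.PosDef)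
    (hric : Sg * Ac + Acᵀ * Sg + (Bcᵀ * Sg - Cc * Ac)ᵀ * R⁻¹ * (Bcᵀ * Sg - Cc * Ac) = 0) :
    ∃ (P Z : Matrix (Fin n) (Fin n) ℝ) (F : Matrix (Fin r) (Fin n) ℝ)
      (L : Matrix (Fin n) (Fin m) ℝ),
      P.PosDef ∧ Z.PosDef ∧
      (P * (A + B₂ * F) + (A + B₂ * F)ᵀ * P +
        (C₁ * (A + B₂ * F) - B₁ᵀ * P)ᵀ * R⁻¹ * (C₁ * (A + B₂ * F) - B₁ᵀ * P) = 0) ∧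
      (Z * (A + L * C₂)ᵀ + (A + L * C₂) * Z +
        (B₁ + L * D₂₁ - Z * Aᵀ * C₁ᵀ) * R⁻¹ * (B₁ + L * D₂₁ - Z * Aᵀ * C₁ᵀ)ᵀ = 0) ∧
      (∀ lam : ℂ, lam ∈ spectrum ℂ ((Z * P).map (Complex.ofReal)) →
        ‖lam‖ ≤ 1) := by
  subst hAc; subst hBc; subst hCc; subst hSg
  have hSym : S₁₁ᵀ = S₁₁ ∧ S₂₂ᵀ = S₂₂ := by
    have h := hSgpd.1
    rw [Matrix.IsHermitian, conjTranspose_eq_transpose_of_trivial, fromBlocks_transpose] at h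
    obtain ⟨h1, -, -, h2⟩ := fromBlocks_inj.mp h
    exact ⟨h1, h2⟩
  obtain ⟨h11s, h22s⟩ := hSym
  have h11pd : S₁₁.PosDef := posdef_block₁₁ hSgpd
  have h22pd : S₂₂.PosDef := posdef_block₂₂ hSgpd
  have h11u : IsUnit S₁₁.det := h11pd.det_pos.ne'.isUnit
  have h22u : IsUnit S₂₂.det := h22pd.det_pos.ne'.isUnit
  have h11it : (S₁₁⁻¹)ᵀ = S₁₁⁻¹ := by rw [transpose_nonsing_inv, h11s]
  have h22it : (S₂₂⁻¹)ᵀ = S₂₂⁻¹ := by rw [transpose_nonsing_inv, h22s]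
  -- candidates
  set G : Matrix (Fin n) (Fin n) ℝ := -(S₂₂⁻¹ * S₁₂ᵀ) with hG
  set P : Matrix (Fin n) (Fin n) ℝ := S₁₁ + S₁₂ * G with hP
  set F : Matrix (Fin r) (Fin n) ℝ := Ck * G with hF
  -- cancellation facts for G
  have hS22G : S₂₂ * G = -S₁₂ᵀ := by
    rw [hG, Matrix.mul_neg, Matrix.mul_nonsing_inv_cancel_left _ _ h22u]
  have hGt : Gᵀ = -(S₁₂ * S₂₂⁻¹) := by
    rw [hG, transpose_neg, transpose_mul, transpose_transpose, h22it]
  have hGtS22 : Gᵀ * S₂₂ = -S₁₂ := by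
    rw [hGt, Matrix.neg_mul, Matrix.nonsing_inv_mul_cancel_right _ _ h22u]
  have hGtS12t : Gᵀ * S₁₂ᵀ = S₁₂ * G := by
    rw [hGt, hG, Matrix.neg_mul, Matrix.mul_neg, Matrix.mul_assoc]
  -- the congruence transformation for part (a)
  have hT : (fromBlocks 1 0 G 1 : Matrix (Fin n ⊕ Fin n) (Fin n ⊕ Fin n) ℝ) *
      (fromBlocks 1 0 (-G) 1) = 1 := by
    simp [fromBlocks_multiply, fromBlocks_one]
  have H := are_congr _ _ _ _ _ _ _ hT hric
  -- block computations
  have hS' : (fromBlocks 1 0 G 1 : Matrix (Fin n ⊕ Fin n) (Fin n ⊕ Fin n) ℝ)ᵀ *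
      fromBlocks S₁₁ S₁₂ S₁₂ᵀ S₂₂ * fromBlocks 1 0 G 1 = fromBlocks P 0 0 S₂₂ := by
    simp only [fromBlocks_transpose, transpose_one, transpose_zero, fromBlocks_multiply,
      Matrix.mul_one, Matrix.one_mul, Matrix.mul_zero, Matrix.zero_mul, add_zero, zero_add,
      hS22G, hGtS22, hGtS12t]
    rw [hP]
    abel_nf
    simp [Matrix.zero_mul]
  rw [hS'] at H
  simp only [fromBlocks_transpose, transpose_one, transpose_zero, transpose_fromRows,
    transpose_fromCols, fromBlocks_multiply, fromBlocks_mul_fromRows,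
    fromCols_mul_fromBlocks, fromRows_mul, fromColumns_sub, fromRows_mul_fromCols,
    mul_fromCols, fromRows_fromCols_eq_fromBlocks,
    fromBlocks_add, Matrix.mul_one, Matrix.one_mul, Matrix.mul_zero, Matrix.zero_mul,
    add_zero, zero_add, zero_sub, sub_zero] at H
  have h11eq := congrArg Matrix.toBlocks₁₁ H
  simp only [Matrix.toBlocks_fromBlocks₁₁, toBlocks₁₁_zero] at h11eq
  -- h11eq : P * Ā + Āᵀ * P + (B₁ᵀ*P - C₁*Ā)ᵀ * R⁻¹ * (B₁ᵀ*P - C₁*Ā) = 0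
  have conda : P * (A + B₂ * F) + (A + B₂ * F)ᵀ * P +
      (C₁ * (A + B₂ * F) - B₁ᵀ * P)ᵀ * R⁻¹ * (C₁ * (A + B₂ * F) - B₁ᵀ * P) = 0 := by
    rw [hF, ← Matrix.mul_assoc B₂ Ck G]
    rw [show C₁ * (A + B₂ * Ck * G) - B₁ᵀ * P = -(B₁ᵀ * P - C₁ * (A + B₂ * Ck * G)) from
      (neg_sub _ _).symm]
    simp only [transpose_neg, Matrix.neg_mul, Matrix.mul_neg, neg_neg]
    exact h11eq
  -- positive definiteness of P
  have hPpd : P.PosDef := by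
    have := posdef_congr hSgpd hT
    rw [hS'] at this
    exact posdef_block₁₁ this
  clear H h11eq hS'
  -- part (b)
  set K : Matrix (Fin n) (Fin n) ℝ := -(S₁₁⁻¹ * S₁₂) with hK
  set Sb : Matrix (Fin n) (Fin n) ℝ := S₂₂ + S₁₂ᵀ * K with hSb
  set L : Matrix (Fin n) (Fin m) ℝ := -(K * Bk) with hL
  set Z : Matrix (Fin n) (Fin n) ℝ := S₁₁⁻¹ with hZ
  have hS11K : S₁₁ * K = -S₁₂ := by
    rw [hK, Matrix.mul_neg, Matrix.mul_nonsing_inv_cancel_left _ _ h11u]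
  have hKt : Kᵀ = -(S₁₂ᵀ * S₁₁⁻¹) := by
    rw [hK, transpose_neg, transpose_mul, h11it]
  have hKtS11 : Kᵀ * S₁₁ = -S₁₂ᵀ := by
    rw [hKt, Matrix.neg_mul, Matrix.nonsing_inv_mul_cancel_right _ _ h11u]
  have hKtS12 : Kᵀ * S₁₂ = S₁₂ᵀ * K := by
    rw [hKt, hK, Matrix.neg_mul, Matrix.mul_neg, Matrix.mul_assoc]
  have hU : (fromBlocks 1 K 0 1 : Matrix (Fin n ⊕ Fin n) (Fin n ⊕ Fin n) ℝ) *
      (fromBlocks 1 (-K) 0 1) = 1 := by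
    simp [fromBlocks_multiply, fromBlocks_one]
  have HB := are_congr _ _ _ _ _ _ _ hU hric
  have hW : (fromBlocks 1 K 0 1 : Matrix (Fin n ⊕ Fin n) (Fin n ⊕ Fin n) ℝ)ᵀ *
      fromBlocks S₁₁ S₁₂ S₁₂ᵀ S₂₂ * fromBlocks 1 K 0 1 = fromBlocks S₁₁ 0 0 Sb := by
    simp only [fromBlocks_transpose, transpose_one, transpose_zero, fromBlocks_multiply,
      Matrix.mul_one, Matrix.one_mul, Matrix.mul_zero, Matrix.zero_mul, add_zero, zero_add,
      hS11K, hKtS11, hKtS12]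
    rw [hSb]
    abel_nf
    simp [Matrix.zero_mul]
  have hSbpd : Sb.PosDef := by
    have := posdef_congr hSgpd hU
    rw [hW] at this
    exact posdef_block₂₂ this
  have hZpd : Z.PosDef := h11pd.inv
  have hSbu : IsUnit Sb.det := hSbpd.det_pos.ne'.isUnit
  have hSbs : Sbᵀ = Sb := by
    have := hSbpd.1
    rwa [Matrix.IsHermitian, conjTranspose_eq_transpose_of_trivial] at this
  have hSbit : (Sb⁻¹)ᵀ = Sb⁻¹ := by rw [transpose_nonsing_inv, hSbs]
  rw [hW] at HB
  have hWs : (fromBlocks S₁₁ 0 0 Sb : Matrix (Fin n ⊕ Fin n) (Fin n ⊕ Fin n) ℝ)ᵀ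
      = fromBlocks S₁₁ 0 0 Sb := by
    simp [fromBlocks_transpose, h11s, hSbs]
  have hY1 : (fromBlocks Z 0 0 Sb⁻¹ : Matrix (Fin n ⊕ Fin n) (Fin n ⊕ Fin n) ℝ) *
      fromBlocks S₁₁ 0 0 Sb = 1 := by
    simp [fromBlocks_multiply, hZ, Matrix.nonsing_inv_mul _ h11u, Matrix.nonsing_inv_mul _ hSbu,
      fromBlocks_one]
  have hY2 : (fromBlocks S₁₁ 0 0 Sb : Matrix (Fin n ⊕ Fin n) (Fin n ⊕ Fin n) ℝ) *
      fromBlocks Z 0 0 Sb⁻¹ = 1 := by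
    simp [fromBlocks_multiply, hZ, Matrix.mul_nonsing_inv _ h11u, Matrix.mul_nonsing_inv _ hSbu,
      fromBlocks_one]
  have hYs : (fromBlocks Z 0 0 Sb⁻¹ : Matrix (Fin n ⊕ Fin n) (Fin n ⊕ Fin n) ℝ)ᵀ
      = fromBlocks Z 0 0 Sb⁻¹ := by
    simp [fromBlocks_transpose, h11it, hSbit]
  have HD := are_dual _ _ _ _ _ _ hWs hY1 hY2 hYs HB
  simp only [fromBlocks_transpose, transpose_one, transpose_zero, transpose_fromRows,
    transpose_fromCols, fromBlocks_multiply, fromBlocks_mul_fromRows,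
    fromCols_mul_fromBlocks, fromRows_mul, fromColumns_sub, fromRows_mul_fromCols,
    mul_fromCols, fromRows_fromCols_eq_fromBlocks, transpose_mul, transpose_neg,
    fromBlocks_add, Matrix.mul_one, Matrix.one_mul, Matrix.mul_zero, Matrix.zero_mul,
    add_zero, zero_add, zero_sub, sub_zero] at HD
  have hNtop : Z * (A + -K * (Bk * C₂))ᵀ * C₁ᵀ + Z * (C₂ᵀ * Bkᵀ) * (Kᵀ * C₁ᵀ)
      = Z * Aᵀ * C₁ᵀ := by
    simp only [transpose_add, transpose_neg, transpose_mul, Matrix.mul_add, Matrix.add_mul,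
      Matrix.mul_neg, Matrix.neg_mul, Matrix.mul_assoc]
    abel
  rw [hNtop] at HD
  have hA11 : A + -K * (Bk * C₂) = A + L * C₂ := by
    rw [hL]; simp only [Matrix.neg_mul, Matrix.mul_assoc]
  have hB11 : B₁ + -K * (Bk * D₂₁) = B₁ + L * D₂₁ := by
    rw [hL]; simp only [Matrix.neg_mul, Matrix.mul_assoc]
  rw [hA11, hB11] at HD
  simp only [fromRows_sub, fromRows_mul, transpose_fromRows, fromRows_mul_fromCols,
    fromBlocks_add] at HD
  have h11eqb := congrArg Matrix.toBlocks₁₁ HD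
  simp only [Matrix.toBlocks_fromBlocks₁₁, toBlocks₁₁_zero] at h11eqb
  have condb : Z * (A + L * C₂)ᵀ + (A + L * C₂) * Z +
      (B₁ + L * D₂₁ - Z * Aᵀ * C₁ᵀ) * R⁻¹ * (B₁ + L * D₂₁ - Z * Aᵀ * C₁ᵀ)ᵀ = 0 := by
    rw [show Z * (A + L * C₂)ᵀ + (A + L * C₂) * Z = (A + L * C₂) * Z + Z * (A + L * C₂)ᵀ from
      add_comm _ _]
    exact h11eqb
  -- part (c)
  have hPSW : P = S₁₁ - S₁₂ * S₂₂⁻¹ * S₁₂ᵀ := by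
    rw [hP, hG, Matrix.mul_neg, ← sub_eq_add_neg, Matrix.mul_assoc]
  have hWpsd : (S₁₂ * S₂₂⁻¹ * S₁₂ᵀ).PosSemidef := by
    have := (h22pd.inv.posSemidef).mul_mul_conjTranspose_same S₁₂
    rwa [conjTranspose_eq_transpose_of_trivial] at this
  refine ⟨P, Z, F, L, hPpd, hZpd, conda, condb, fun lam hlam => ?_⟩
  exact spec_bound S₁₁ P (S₁₂ * S₂₂⁻¹ * S₁₂ᵀ) h11pd hPpd hWpsd hPSW lam hlam
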